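/- For n ≥ 2 even, define v_i = (1, i) for i = 1,…,n and v_{n+i} = (−1, −i) for i = 1,…,n; arrange these 2n vectors counterclockwise around the origin. Their total sum is 0, and the maximum absolute value of any coordinate of any partial sum (in counterclockwise order) is Θ(n²); specifically the y-extent of the resulting polygon equals 1 + 2 + ⋯ + n = n(n+1)/2. -/

import Mathlib

/-- The naive construction: vectors `(1,1),…,(1,n),(−1,−1),…,(−1,−n)` sum to
zero, and the vertical extent of the polygon of partial sums equals
`1 + 2 + ⋯ + n = n(n+1)/2`, which is `Θ(n²)`. -/
theorem naive_construction_size (n : ℕ) (hn : 2 ≤ n) (heven : Even n)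
    (v : ℕ → ℤ × ℤ)
    (hv : ∀ i < 2 * n, v i = if i < n then ((1 : ℤ), (i : ℤ) + 1)
      else ((-1 : ℤ), -((i : ℤ) - n + 1))) :
    (∑ i ∈ Finset.range (2 * n), v i = 0) ∧
    ((Finset.range (2 * n + 1)).sup'
        (by simp) (fun k => (∑ i ∈ Finset.range k, v i).2)
      - (Finset.range (2 * n + 1)).inf'
        (by simp) (fun k => (∑ i ∈ Finset.range k, v i).2)
      = (n * (n + 1) : ℤ) / 2) := by
  set S : ℕ → ℤ := fun k => (∑ i ∈ Finset.range k, v i).2 with hS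
  set X : ℕ → ℤ := fun k => (∑ i ∈ Finset.range k, v i).1 with hX
  -- closed form on the first half
  have h1 : ∀ k ≤ n, 2 * S k = k * (k + 1) ∧ X k = k := by
    intro k hk
    induction k with
    | zero => simp [hS, hX]
    | succ k ih =>
      have hk' : k ≤ n := Nat.le_of_succ_le hk
      have hkn : k < n := hk
      obtain ⟨ih1, ih2⟩ := ih hk'
      have hvk := hv k (by omega)
      rw [if_pos hkn] at hvk
      constructor
      · have : S (k + 1) = S k + (v k).2 := by
          simp [hS, Finset.sum_range_succ]
        rw [this, hvk]
        push_cast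
        push_cast at ih1
        ring_nf
        ring_nf at ih1
        linarith
      · have : X (k + 1) = X k + (v k).1 := by
          simp [hX, Finset.sum_range_succ]
        rw [this, hvk, ih2]
        push_cast
        ring
  -- closed form on the second half
  have h2 : ∀ k, n ≤ k → k ≤ 2 * n →
      2 * S k = n * (n + 1) - ((k : ℤ) - n) * ((k : ℤ) - n + 1) ∧
      X k = 2 * n - (k : ℤ) := by
    intro k hk hk2
    induction k, hk using Nat.le_induction with
    | base =>
      obtain ⟨h1a, h1b⟩ := h1 n le_rfl
      constructor
      · rw [h1a]; ring
      · rw [h1b]; ring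
    | succ k hk ih =>
      obtain ⟨ih1, ih2⟩ := ih (by omega)
      have hvk := hv k (by omega)
      rw [if_neg (by omega)] at hvk
      constructor
      · have : S (k + 1) = S k + (v k).2 := by
          simp [hS, Finset.sum_range_succ]
        rw [this, hvk]
        push_cast
        push_cast at ih1
        ring_nf
        ring_nf at ih1
        linarith
      · have : X (k + 1) = X k + (v k).1 := by
          simp [hX, Finset.sum_range_succ]
        rw [this, hvk, ih2]
        push_cast
        ring
  obtain ⟨h2a, h2b⟩ := h2 (2 * n) (by omega) le_rfl
  -- evenness fact for division
  have hM : 2 * ((n * (n + 1) : ℤ) / 2) = n * (n + 1) := by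
    obtain ⟨m, hm⟩ := Int.even_mul_succ_self (n : ℤ)
    rw [hm]; omega
  -- bounds for all partial sums
  have hbound : ∀ k ≤ 2 * n, 0 ≤ S k ∧ S k ≤ (n * (n + 1) : ℤ) / 2 := by
    intro k hk
    rcases le_or_gt k n with h | h
    · obtain ⟨ha, _⟩ := h1 k h
      have hc : (k : ℤ) ≤ n := by exact_mod_cast h
      have hc0 : (0 : ℤ) ≤ k := by positivity
      constructor
      · nlinarith
      · nlinarith
    · obtain ⟨ha, _⟩ := h2 k h.le hk
      have hc : (k : ℤ) ≤ 2 * n := by exact_mod_cast hk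
      have hc2 : (n : ℤ) ≤ k := by exact_mod_cast h.le
      constructor
      · nlinarith
      · nlinarith
  constructor
  · -- total sum is zero
    have hx : X (2 * n) = 0 := by rw [h2b]; push_cast; ring
    have hy : S (2 * n) = 0 := by
      have : ((2 * n : ℕ) : ℤ) - n = n := by push_cast; ring
      rw [this] at h2a; omega
    exact Prod.ext hx hy
  · -- sup and inf
    have hsup : (Finset.range (2 * n + 1)).sup' (by simp) S
        = (n * (n + 1) : ℤ) / 2 := by
      apply le_antisymm
      · apply Finset.sup'_le
        intro k hk
        exact (hbound k (by simpa using Nat.lt_succ_iff.mp (Finset.mem_range.mp hk))).2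
      · have hmem : n ∈ Finset.range (2 * n + 1) := Finset.mem_range.mpr (by omega)
        have := Finset.le_sup' S hmem
        obtain ⟨ha, _⟩ := h1 n le_rfl
        have hSn : S n = (n * (n + 1) : ℤ) / 2 := by omega
        rw [hSn] at this
        exact this
    have hinf : (Finset.range (2 * n + 1)).inf' (by simp) S = 0 := by
      apply le_antisymm
      · have hmem : (0 : ℕ) ∈ Finset.range (2 * n + 1) := Finset.mem_range.mpr (by omega)
        have := Finset.inf'_le S hmem
        exact this.trans (le_of_eq (by simp [hS]))
      · apply Finset.le_inf'
        intro k hk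
        exact (hbound k (by simpa using Nat.lt_succ_iff.mp (Finset.mem_range.mp hk))).1
    rw [hsup, hinf]
    ring
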